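/- Let n ≥ m ≥ 2 and let σ ∈ Sₙ be a permutation with exactly n − m fixed points. Then there exist ℓ ≤ m/2 transpositions τ₁,…,τ_ℓ such that τ_ℓ ∘ ⋯ ∘ τ₁ ∘ σ has exactly n − m fixed points and its nontrivial cycles are: m/2 disjoint 2-cycles if m is even, or (m−3)/2 disjoint 2-cycles together with one disjoint 3-cycle if m is odd. -/

import Mathlib

open Equiv Equiv.Perm Finset

variable {α : Type*} [DecidableEq α] [Fintype α]

private lemma exists_odd_of_odd_sum {s : Multiset ℕ} (h : Odd s.sum) : ∃ a ∈ s, Odd a := by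
  by_contra hc
  push_neg at hc
  simp only [Nat.not_odd_iff_even] at hc
  have key : ∀ t : Multiset ℕ, (∀ a ∈ t, Even a) → Even t.sum := by
    intro t
    induction t using Multiset.induction_on with
    | empty => simp
    | cons a s ih =>
      intro h'
      rw [Multiset.sum_cons]
      exact Even.add (h' a (Multiset.mem_cons_self a s))
        (ih fun b hb => h' b (Multiset.mem_cons_of_mem hb))
  exact (Nat.not_odd_iff_even.mpr (key s hc)) h

/-- Any permutation is a product of at most `support.card - 1` swaps. -/
private lemma swap_factors : ∀ (N : ℕ) (ρ : Perm α), ρ.support.card ≤ N →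
    ∃ l : List (Perm α), (∀ τ ∈ l, τ.IsSwap) ∧ l.prod = ρ ∧ l.length ≤ ρ.support.card - 1 := by
  intro N
  induction N with
  | zero =>
    intro ρ h
    have hρ : ρ = 1 := by
      rw [← Equiv.Perm.support_eq_empty_iff]
      exact Finset.card_eq_zero.mp (Nat.le_antisymm h (Nat.zero_le _))
    exact ⟨[], by simp, by simp [hρ], by simp⟩
  | succ N ih =>
    intro ρ h
    by_cases h1 : ρ = 1
    · exact ⟨[], by simp, by simp [h1], by simp⟩
    · obtain ⟨x, hx⟩ : ∃ x, ρ x ≠ x := by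
        by_contra hcon
        push_neg at hcon
        exact h1 (Equiv.ext hcon)
      have hlt := Equiv.Perm.card_support_swap_mul hx
      obtain ⟨l', hsw, hprod, hlen⟩ := ih (Equiv.swap x (ρ x) * ρ) (by omega)
      refine ⟨Equiv.swap x (ρ x) :: l', ?_, ?_, ?_⟩
      · intro τ hτ
        rcases List.mem_cons.mp hτ with rfl | hτ'
        · exact ⟨x, ρ x, Ne.symm hx, rfl⟩
        · exact hsw τ hτ'
      · rw [List.prod_cons, hprod, ← mul_assoc, Equiv.swap_mul_self, one_mul]
      · have h2 : 2 ≤ ρ.support.card := Equiv.Perm.two_le_card_support_of_ne_one h1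
        simp only [List.length_cons]
        omega

private lemma mem_support_list_prod {l : List (Perm α)} (h : l.Pairwise Perm.Disjoint) (y : α) :
    y ∈ l.prod.support ↔ ∃ τ ∈ l, y ∈ τ.support := by
  induction l with
  | nil => simp
  | cons hd l ih =>
    obtain ⟨h1, h2⟩ := List.pairwise_cons.mp h
    have hd2 : Perm.Disjoint hd l.prod := Equiv.Perm.disjoint_prod_right l h1
    rw [List.prod_cons, hd2.support_mul]
    simp only [Finset.mem_union, ih h2, List.mem_cons]
    aesop

private lemma list_prod_apply_eq {l : List (Perm α)} (h : l.Pairwise Perm.Disjoint)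
    {τ : Perm α} (hτ : τ ∈ l) {y : α} (hy : y ∈ τ.support) : l.prod y = τ y := by
  induction l with
  | nil => simp at hτ
  | cons hd l ih =>
    obtain ⟨h1, h2⟩ := List.pairwise_cons.mp h
    have hd2 : Perm.Disjoint hd l.prod := Equiv.Perm.disjoint_prod_right l h1
    rw [List.prod_cons, Equiv.Perm.mul_apply]
    rcases List.mem_cons.mp hτ with rfl | hτ'
    · have hfix : l.prod y = y := by
        by_contra hcon
        rcases hd2 y with hcase | hcase
        · exact (Equiv.Perm.mem_support.mp hy) hcase
        · exact hcon hcase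
      rw [hfix]
    · rw [ih h2 hτ']
      have hmem : τ y ∈ l.prod.support := by
        rw [mem_support_list_prod h2]
        exact ⟨τ, hτ', Equiv.Perm.apply_mem_support.mpr hy⟩
      rcases hd2 (τ y) with hcase | hcase
      · exact hcase
      · exact absurd hcase (Equiv.Perm.mem_support.mp hmem)

private lemma cycleType_list_prod {l : List (Perm α)} (h : l.Pairwise Perm.Disjoint)
    (hs : ∀ τ ∈ l, τ.IsSwap) : l.prod.cycleType = Multiset.replicate l.length 2 := by
  induction l with
  | nil => simp
  | cons hd l ih =>
    obtain ⟨h1, h2⟩ := List.pairwise_cons.mp h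
    have hd2 : Perm.Disjoint hd l.prod := Equiv.Perm.disjoint_prod_right l h1
    rw [List.prod_cons, hd2.cycleType_mul, ih h2 (fun τ hτ => hs τ (List.mem_cons_of_mem _ hτ))]
    obtain ⟨a, b, hab, heq⟩ := hs hd List.mem_cons_self
    subst heq
    have hcyc : (Equiv.swap a b).IsCycle := Equiv.Perm.isCycle_swap hab
    rw [hcyc.cycleType, Equiv.Perm.card_support_swap hab]
    simp [Multiset.replicate_succ]

/-- the agreement bound: if `π` agrees with `σ` on `A ⊆ supp σ` then the support of
`π * σ⁻¹` avoids `σ '' A`. -/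
private lemma card_support_mul_inv_le (π σ : Perm α) (A : Finset α) (hA : A ⊆ σ.support)
    (hπ : π.support ⊆ σ.support) (hag : ∀ y ∈ A, π y = σ y) :
    (π * σ⁻¹).support.card ≤ σ.support.card - A.card := by
  have himsub : A.image σ ⊆ σ.support := by
    intro b hb
    obtain ⟨a, ha, rfl⟩ := Finset.mem_image.mp hb
    exact Equiv.Perm.apply_mem_support.mpr (hA ha)
  have hsub : (π * σ⁻¹).support ⊆ σ.support \ A.image σ := by
    intro y hy
    rw [Finset.mem_sdiff]
    constructor
    · by_contra hyn
      have h1 : σ⁻¹ y = y := by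
        rw [← Equiv.Perm.notMem_support, Equiv.Perm.support_inv]
        exact hyn
      have h2 : π y = y := by
        rw [← Equiv.Perm.notMem_support]
        exact fun hmem => hyn (hπ hmem)
      exact (Equiv.Perm.mem_support.mp hy) (by rw [Equiv.Perm.mul_apply, h1, h2])
    · intro him
      obtain ⟨a, ha, rfl⟩ := Finset.mem_image.mp him
      have hfix : (π * σ⁻¹) (σ a) = σ a := by
        rw [Equiv.Perm.mul_apply, Equiv.Perm.inv_def, Equiv.symm_apply_apply, hag a ha]
      exact (Equiv.Perm.mem_support.mp hy) hfix
  calc (π * σ⁻¹).support.card ≤ (σ.support \ A.image σ).card := Finset.card_le_card hsub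
    _ = σ.support.card - (A.image σ).card := Finset.card_sdiff_of_subset himsub
    _ = σ.support.card - A.card := by
        rw [Finset.card_image_of_injective A σ.injective]

private lemma cycle_points (c : Perm α) (hc : c.IsCycle) :
    ∃ a : ℕ → α, (∀ i, c (a i) = a (i + 1)) ∧ (∀ i, a i ∈ c.support) ∧
      (∀ i < c.support.card, ∀ j < c.support.card, a i = a j → i = j) ∧
      (∀ y ∈ c.support, ∃ i < c.support.card, a i = y) := by
  obtain ⟨x, hx, -⟩ := id hc
  refine ⟨fun i => (c ^ i) x, ?_, ?_, ?_, ?_⟩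
  · intro i
    rw [← Equiv.Perm.mul_apply, ← pow_succ']
  · intro i
    exact Equiv.Perm.pow_apply_mem_support.mpr (Equiv.Perm.mem_support.mpr hx)
  · intro i hi j hj hij
    have hpow : c ^ i = c ^ j := hc.pow_eq_pow_iff.mpr ⟨x, hx, hij⟩
    have ho : orderOf c = c.support.card := hc.orderOf
    exact pow_injOn_Iio_orderOf (by simpa [ho] using hi) (by simpa [ho] using hj) hpow
  · intro y hy
    obtain ⟨i, hi⟩ := hc.exists_pow_eq hx (Equiv.Perm.mem_support.mp hy)
    have hpos : 0 < c.support.card := by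
      have := hc.two_le_card_support
      omega
    refine ⟨i % c.support.card, Nat.mod_lt _ hpos, ?_⟩
    show (c ^ (i % c.support.card)) x = y
    rw [← hc.orderOf, pow_mod_orderOf, hi]

private lemma swap_disjoint_swap {p q u v : α} (h1 : p ≠ q) (h2 : u ≠ v) (h3 : p ≠ u)
    (h4 : p ≠ v) (h5 : q ≠ u) (h6 : q ≠ v) :
    Perm.Disjoint (Equiv.swap p q) (Equiv.swap u v) := by
  rw [Equiv.Perm.disjoint_iff_disjoint_support, Equiv.Perm.support_swap h1,
    Equiv.Perm.support_swap h2, Finset.disjoint_left]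
  intro x hx hx'
  simp only [Finset.mem_insert, Finset.mem_singleton] at hx hx'
  rcases hx with rfl | rfl <;> rcases hx' with rfl | rfl <;> simp_all

private lemma pairs_prod_spec (f : ℕ → α) (K M : ℕ) (hM : 2 * M ≤ K)
    (hinj : ∀ i < K, ∀ j < K, f i = f j → i = j)
    (L : List (Perm α)) (hL : L = (List.range M).map fun i => Equiv.swap (f (2*i)) (f (2*i+1))) :
    (∀ τ ∈ L, τ.IsSwap) ∧ L.Pairwise Perm.Disjoint ∧
      L.prod.cycleType = Multiset.replicate M 2 ∧
      (∀ y, y ∈ L.prod.support ↔ ∃ i < M, y = f (2*i) ∨ y = f (2*i+1)) ∧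
      (∀ i < M, L.prod (f (2*i)) = f (2*i+1)) := by
  subst hL
  have hne : ∀ i < K, ∀ j < K, i ≠ j → f i ≠ f j := by
    intro i hi j hj hij heq
    exact hij (hinj i hi j hj heq)
  have hfne : ∀ i < M, f (2*i) ≠ f (2*i+1) := by
    intro i hi
    exact hne (2*i) (by omega) (2*i+1) (by omega) (by omega)
  have hswap : ∀ τ ∈ (List.range M).map fun i => Equiv.swap (f (2*i)) (f (2*i+1)), τ.IsSwap := by
    intro τ hτ
    obtain ⟨i, hi, rfl⟩ := List.mem_map.mp hτ
    rw [List.mem_range] at hi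
    exact ⟨_, _, hfne i hi, rfl⟩
  have hpair : ((List.range M).map fun i => Equiv.swap (f (2*i)) (f (2*i+1))).Pairwise
      Perm.Disjoint := by
    rw [List.pairwise_iff_getElem]
    intro i j hi hj hij
    simp only [List.length_map, List.length_range] at hi hj
    simp only [List.getElem_map, List.getElem_range]
    exact swap_disjoint_swap (hfne i hi) (hfne j hj)
      (hne _ (by omega) _ (by omega) (by omega)) (hne _ (by omega) _ (by omega) (by omega))
      (hne _ (by omega) _ (by omega) (by omega)) (hne _ (by omega) _ (by omega) (by omega))
  refine ⟨hswap, hpair, ?_, ?_, ?_⟩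
  · rw [cycleType_list_prod hpair hswap]
    simp
  · intro y
    rw [mem_support_list_prod hpair]
    constructor
    · rintro ⟨τ, hτ, hy⟩
      obtain ⟨i, hi, rfl⟩ := List.mem_map.mp hτ
      rw [List.mem_range] at hi
      rw [Equiv.Perm.support_swap (hfne i hi)] at hy
      simp only [Finset.mem_insert, Finset.mem_singleton] at hy
      exact ⟨i, hi, hy⟩
    · rintro ⟨i, hi, hy⟩
      refine ⟨Equiv.swap (f (2*i)) (f (2*i+1)), List.mem_map.mpr ⟨i, List.mem_range.mpr hi, rfl⟩, ?_⟩
      rw [Equiv.Perm.support_swap (hfne i hi)]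
      simp only [Finset.mem_insert, Finset.mem_singleton]
      exact hy
  · intro i hi
    have hmem : Equiv.swap (f (2*i)) (f (2*i+1)) ∈
        (List.range M).map fun i => Equiv.swap (f (2*i)) (f (2*i+1)) :=
      List.mem_map.mpr ⟨i, List.mem_range.mpr hi, rfl⟩
    rw [list_prod_apply_eq hpair hmem (by
      rw [Equiv.Perm.support_swap (hfne i hi)]; exact Finset.mem_insert_self _ _)]
    exact Equiv.swap_apply_left _ _

private lemma block_even (c : Perm α) (hc : c.IsCycle) (r : ℕ) (hk : c.support.card = 2 * r) :
    ∃ π : Perm α, π.support = c.support ∧ π.cycleType = Multiset.replicate r 2 ∧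
      (π * c⁻¹).support.card ≤ r := by
  obtain ⟨a, hsucc, hmem, hinj, hsurj⟩ := cycle_points c hc
  rw [hk] at hinj hsurj
  obtain ⟨hswap, hpair, htype, hsupp, hact⟩ := pairs_prod_spec a (2*r) r le_rfl hinj _ rfl
  set L := (List.range r).map fun i => Equiv.swap (a (2*i)) (a (2*i+1)) with hLdef
  have hsuppc : L.prod.support = c.support := by
    ext y
    rw [hsupp y]
    constructor
    · rintro ⟨i, hi, rfl | rfl⟩ <;> exact hmem _
    · intro hy
      obtain ⟨j, hj, rfl⟩ := hsurj y hy
      refine ⟨j / 2, by omega, ?_⟩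
      rcases Nat.even_or_odd j with ⟨u, hu⟩ | ⟨u, hu⟩
      · left; congr 1; omega
      · right; congr 1; omega
  refine ⟨L.prod, hsuppc, htype, ?_⟩
  have hA : ((Finset.range r).image fun i => a (2*i)) ⊆ c.support := by
    intro y hy
    obtain ⟨i, hi, rfl⟩ := Finset.mem_image.mp hy
    exact hmem _
  have hcardA : ((Finset.range r).image fun i => a (2*i)).card = r := by
    rw [Finset.card_image_of_injOn, Finset.card_range]
    intro i hi j hj hij
    rw [Finset.mem_coe, Finset.mem_range] at hi hj
    have := hinj (2*i) (by omega) (2*j) (by omega) hij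
    omega
  have hbound := card_support_mul_inv_le L.prod c ((Finset.range r).image fun i => a (2*i))
    hA (by rw [hsuppc]) ?_
  · rw [hcardA, hk] at hbound
    omega
  · intro y hy
    obtain ⟨i, hi, rfl⟩ := Finset.mem_image.mp hy
    rw [Finset.mem_range] at hi
    rw [hact i hi, hsucc]

private lemma block_odd (c : Perm α) (hc : c.IsCycle) (r : ℕ) (hk : c.support.card = 2 * r + 3) :
    ∃ π : Perm α, π.support = c.support ∧
      π.cycleType = Multiset.replicate r 2 + {3} ∧ (π * c⁻¹).support.card ≤ r + 1 := by
  obtain ⟨a, hsucc, hmem, hinj, hsurj⟩ := cycle_points c hc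
  rw [hk] at hinj hsurj
  have hne : ∀ i < 2*r+3, ∀ j < 2*r+3, i ≠ j → a i ≠ a j := by
    intro i hi j hj hij heq
    exact hij (hinj i hi j hj heq)
  obtain ⟨hswap, hpair, htype, hsupp, hact⟩ := pairs_prod_spec a (2*r+3) r (by omega) hinj _ rfl
  set L := (List.range r).map fun i => Equiv.swap (a (2*i)) (a (2*i+1)) with hLdef
  set p := a (2*r) with hp
  set q := a (2*r+1) with hq
  set z := a (2*r+2) with hz
  have hpq : p ≠ q := hne _ (by omega) _ (by omega) (by omega)
  have hpz : p ≠ z := hne _ (by omega) _ (by omega) (by omega)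
  have hqz : q ≠ z := hne _ (by omega) _ (by omega) (by omega)
  set t : Perm α := Equiv.swap p q * Equiv.swap q z with ht
  have htsupp : t.support = {p, q, z} := by
    apply Equiv.Perm.support_swap_mul_swap
    simp [hpq, hpz, hqz]
  have hnotL : ∀ y ∈ ({p, q, z} : Finset α), y ∉ L.prod.support := by
    intro y hy hymem
    obtain ⟨i, hi, hcase⟩ := (hsupp y).mp hymem
    simp only [Finset.mem_insert, Finset.mem_singleton] at hy
    rcases hy with rfl | rfl | rfl <;> rcases hcase with h | h <;>
      exact hne _ (by omega) _ (by omega) (by omega) h.symm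
  have hdisj : Perm.Disjoint t L.prod := by
    rw [Equiv.Perm.disjoint_iff_disjoint_support, htsupp, Finset.disjoint_left]
    exact hnotL
  have htp : t p = q := by
    rw [ht, Equiv.Perm.mul_apply, Equiv.swap_apply_of_ne_of_ne hpq hpz,
      Equiv.swap_apply_left]
  have htq : t q = z := by
    rw [ht, Equiv.Perm.mul_apply, Equiv.swap_apply_left,
      Equiv.swap_apply_of_ne_of_ne (Ne.symm hpz) (Ne.symm hqz)]
  have htfix : ∀ i < 2*r, t (a i) = a i := by
    intro i hi
    rw [ht, Equiv.Perm.mul_apply,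
      Equiv.swap_apply_of_ne_of_ne (hne _ (by omega) _ (by omega) (by omega))
        (hne _ (by omega) _ (by omega) (by omega)),
      Equiv.swap_apply_of_ne_of_ne (hne _ (by omega) _ (by omega) (by omega))
        (hne _ (by omega) _ (by omega) (by omega))]
  refine ⟨t * L.prod, ?_, ?_, ?_⟩
  · rw [hdisj.support_mul, htsupp]
    ext y
    simp only [Finset.mem_union, Finset.mem_insert, Finset.mem_singleton]
    constructor
    · rintro ((rfl | rfl | rfl) | hy)
      · exact hmem _
      · exact hmem _
      · exact hmem _
      · obtain ⟨i, hi, rfl | rfl⟩ := (hsupp y).mp hy <;> exact hmem _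
    · intro hy
      obtain ⟨j, hj, rfl⟩ := hsurj y hy
      by_cases hj2 : j < 2*r
      · right
        rw [hsupp]
        refine ⟨j / 2, by omega, ?_⟩
        rcases Nat.even_or_odd j with ⟨u, hu⟩ | ⟨u, hu⟩
        · left; congr 1; omega
        · right; congr 1; omega
      · left
        have : j = 2*r ∨ j = 2*r+1 ∨ j = 2*r+2 := by omega
        rcases this with rfl | rfl | rfl
        · left; rfl
        · right; left; rfl
        · right; right; rfl
  · rw [hdisj.cycleType_mul, htype]
    have h3 : t.IsThreeCycle := by
      rw [ht, Equiv.swap_comm p q]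
      exact Equiv.Perm.isThreeCycle_swap_mul_swap_same (Ne.symm hpq) hqz hpz
    rw [h3.cycleType, add_comm]
  · set A : Finset α := ((Finset.range r).image fun i => a (2*i)) ∪ {p, q} with hA
    have hAsub : A ⊆ c.support := by
      intro y hy
      rw [hA, Finset.mem_union] at hy
      rcases hy with hy | hy
      · obtain ⟨i, hi, rfl⟩ := Finset.mem_image.mp hy
        exact hmem _
      · simp only [Finset.mem_insert, Finset.mem_singleton] at hy
        rcases hy with rfl | rfl <;> exact hmem _
    have hcardA : A.card = r + 2 := by
      rw [hA, Finset.card_union_of_disjoint, Finset.card_image_of_injOn, Finset.card_range]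
      · rw [Finset.card_insert_of_notMem (by simp [hpq]), Finset.card_singleton]
      · intro i hi j hj hij
        rw [Finset.mem_coe, Finset.mem_range] at hi hj
        have := hinj (2*i) (by omega) (2*j) (by omega) hij
        omega
      · rw [Finset.disjoint_left]
        intro y hy hy2
        obtain ⟨i, hi, rfl⟩ := Finset.mem_image.mp hy
        rw [Finset.mem_range] at hi
        simp only [Finset.mem_insert, Finset.mem_singleton] at hy2
        rcases hy2 with h | h <;>
          exact hne _ (by omega) _ (by omega) (by omega) h
    have hπsub : (t * L.prod).support ⊆ c.support := by
      rw [hdisj.support_mul, htsupp]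
      intro y hy
      rcases Finset.mem_union.mp hy with hy | hy
      · simp only [Finset.mem_insert, Finset.mem_singleton] at hy
        rcases hy with rfl | rfl | rfl <;> exact hmem _
      · obtain ⟨i, hi, rfl | rfl⟩ := (hsupp y).mp hy <;> exact hmem _
    have hbound := card_support_mul_inv_le (t * L.prod) c A hAsub hπsub ?_
    · rw [hcardA, hk] at hbound
      omega
    · intro y hy
      rw [hA, Finset.mem_union] at hy
      rcases hy with hy | hy
      · obtain ⟨i, hi, rfl⟩ := Finset.mem_image.mp hy
        rw [Finset.mem_range] at hi
        rw [Equiv.Perm.mul_apply, hact i hi, htfix _ (by omega), hsucc]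
      · simp only [Finset.mem_insert, Finset.mem_singleton] at hy
        rcases hy with rfl | rfl
        · have hfix : L.prod p = p := by
            by_contra hcon
            exact hnotL p (by simp) (Equiv.Perm.mem_support.mpr hcon)
          rw [Equiv.Perm.mul_apply, hfix, htp, hp, hsucc]
        · have hfix : L.prod q = q := by
            by_contra hcon
            exact hnotL q (by simp) (Equiv.Perm.mem_support.mpr hcon)
          rw [Equiv.Perm.mul_apply, hfix, htq, hq, hsucc]

private lemma block_pair (c d : Perm α) (hc : c.IsCycle) (hd : d.IsCycle)
    (hcd : Perm.Disjoint c d) (s t : ℕ)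
    (hks : c.support.card = 2 * s + 3) (hkt : d.support.card = 2 * t + 3) :
    ∃ π : Perm α, π.support = c.support ∪ d.support ∧
      π.cycleType = Multiset.replicate (s + t + 3) 2 ∧
      (π * (c * d)⁻¹).support.card ≤ s + t + 4 := by
  obtain ⟨a, hasucc, hamem, hainj, hasurj⟩ := cycle_points c hc
  obtain ⟨b, hbsucc, hbmem, hbinj, hbsurj⟩ := cycle_points d hd
  rw [hks] at hainj hasurj
  rw [hkt] at hbinj hbsurj
  have hdsupp : _root_.Disjoint c.support d.support := hcd.disjoint_support
  set f : ℕ → α := fun i => if i < 2*s+3 then a i else b (i - (2*s+3)) with hf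
  have hfa : ∀ i, i < 2*s+3 → f i = a i := by intro i hi; simp [hf, hi]
  have hfb : ∀ i, 2*s+3 ≤ i → f i = b (i - (2*s+3)) := by
    intro i hi; simp only [hf]; rw [if_neg (by omega)]
  have hinj : ∀ i < 2*s+2*t+6, ∀ j < 2*s+2*t+6, f i = f j → i = j := by
    intro i hi j hj heq
    by_cases hi2 : i < 2*s+3 <;> by_cases hj2 : j < 2*s+3
    · rw [hfa i hi2, hfa j hj2] at heq
      exact hainj i hi2 j hj2 heq
    · rw [hfa i hi2, hfb j (by omega)] at heq
      exact absurd (heq ▸ hamem i) (Finset.disjoint_left.mp hdsupp.symm (hbmem _))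
    · rw [hfb i (by omega), hfa j hj2] at heq
      exact absurd (heq ▸ hbmem (i - (2*s+3))) (Finset.disjoint_left.mp hdsupp (hamem j))
    · rw [hfb i (by omega), hfb j (by omega)] at heq
      have := hbinj (i - (2*s+3)) (by omega) (j - (2*s+3)) (by omega) heq
      omega
  obtain ⟨hswap, hpair, htype, hsupp, hact⟩ :=
    pairs_prod_spec f (2*s+2*t+6) (s+t+3) (by omega) hinj _ rfl
  set L := (List.range (s+t+3)).map fun i => Equiv.swap (f (2*i)) (f (2*i+1)) with hLdef
  have hfmem : ∀ i < 2*s+2*t+6, f i ∈ c.support ∪ d.support := by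
    intro i hi
    by_cases hi2 : i < 2*s+3
    · rw [hfa i hi2]; exact Finset.mem_union_left _ (hamem i)
    · rw [hfb i (by omega)]; exact Finset.mem_union_right _ (hbmem _)
  refine ⟨L.prod, ?_, by rw [htype], ?_⟩
  · ext y
    rw [hsupp y]
    constructor
    · rintro ⟨i, hi, rfl | rfl⟩
      · exact hfmem _ (by omega)
      · exact hfmem _ (by omega)
    · intro hy
      have hex : ∃ j < 2*s+2*t+6, f j = y := by
        rcases Finset.mem_union.mp hy with hy | hy
        · obtain ⟨j, hj, rfl⟩ := hasurj y hy
          exact ⟨j, by omega, hfa j hj⟩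
        · obtain ⟨j, hj, rfl⟩ := hbsurj y hy
          refine ⟨2*s+3+j, by omega, ?_⟩
          rw [hfb _ (by omega)]
          congr 1
          omega
      obtain ⟨j, hj, rfl⟩ := hex
      refine ⟨j / 2, by omega, ?_⟩
      rcases Nat.even_or_odd j with ⟨u, hu⟩ | ⟨u, hu⟩
      · left; congr 1; omega
      · right; congr 1; omega
  · set A : Finset α := ((Finset.range (s+1)).image fun i => f (2*i)) ∪
      ((Finset.range (t+1)).image fun i => f (2*s+4+2*i)) with hA
    have hcdsupp : (c * d).support = c.support ∪ d.support := hcd.support_mul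
    have hcdcard : (c * d).support.card = 2*s+2*t+6 := by
      rw [hcdsupp, Finset.card_union_of_disjoint hdsupp, hks, hkt]
      omega
    have hAsub : A ⊆ (c * d).support := by
      intro y hy
      rw [hA, Finset.mem_union] at hy
      rw [hcdsupp]
      rcases hy with hy | hy <;> obtain ⟨i, hi, rfl⟩ := Finset.mem_image.mp hy <;>
        rw [Finset.mem_range] at hi
      · exact hfmem _ (by omega)
      · exact hfmem _ (by omega)
    have hcardA : A.card = s + t + 2 := by
      have hdisjA : _root_.Disjoint ((Finset.range (s+1)).image fun i => f (2*i))
          ((Finset.range (t+1)).image fun i => f (2*s+4+2*i)) := by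
        rw [Finset.disjoint_left]
        intro y hy hy2
        obtain ⟨i, hi, rfl⟩ := Finset.mem_image.mp hy
        obtain ⟨j, hj, heq⟩ := Finset.mem_image.mp hy2
        rw [Finset.mem_range] at hi hj
        have := hinj (2*s+4+2*j) (by omega) (2*i) (by omega) heq
        omega
      have hinj1 : Set.InjOn (fun i => f (2*i)) (Finset.range (s+1)) := by
        intro i hi j hj hij
        rw [Finset.mem_coe, Finset.mem_range] at hi hj
        have := hinj (2*i) (by omega) (2*j) (by omega) hij
        omega
      have hinj2 : Set.InjOn (fun i => f (2*s+4+2*i)) (Finset.range (t+1)) := by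
        intro i hi j hj hij
        rw [Finset.mem_coe, Finset.mem_range] at hi hj
        have := hinj (2*s+4+2*i) (by omega) (2*s+4+2*j) (by omega) hij
        omega
      rw [hA, Finset.card_union_of_disjoint hdisjA, Finset.card_image_of_injOn hinj1,
        Finset.card_image_of_injOn hinj2, Finset.card_range, Finset.card_range]
      omega
    have hπsub : L.prod.support ⊆ (c * d).support := by
      intro y hy
      obtain ⟨i, hi, rfl | rfl⟩ := (hsupp y).mp hy <;> rw [hcdsupp] <;>
        exact hfmem _ (by omega)
    have hbound := card_support_mul_inv_le L.prod (c * d) A hAsub hπsub ?_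
    · rw [hcardA, hcdcard] at hbound
      omega
    · intro y hy
      rw [hA, Finset.mem_union] at hy
      rcases hy with hy | hy <;> obtain ⟨i, hi, rfl⟩ := Finset.mem_image.mp hy <;>
        rw [Finset.mem_range] at hi
      · rw [hact i (by omega)]
        rw [hfa _ (by omega), hfa _ (by omega), Equiv.Perm.mul_apply]
        have hdfix : d (a (2*i)) = a (2*i) := by
          rcases hcd (a (2*i)) with h | h
          · exact absurd h (Equiv.Perm.mem_support.mp (hamem _))
          · exact h
        rw [hdfix, hasucc]
      · have harith : 2*s+4+2*i = 2*(s+2+i) := by omega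
        rw [harith, hact (s+2+i) (by omega)]
        rw [hfb _ (by omega), hfb _ (by omega), Equiv.Perm.mul_apply]
        have h1 : 2*(s+2+i) - (2*s+3) = 2*i+1 := by omega
        have h2 : 2*(s+2+i)+1 - (2*s+3) = 2*i+2 := by omega
        rw [h1, h2, hbsucc]
        have hcfix : c (b (2*i+2)) = b (2*i+2) := by
          rcases hcd (b (2*i+2)) with h | h
          · exact h
          · exact absurd h (Equiv.Perm.mem_support.mp (hbmem _))
        rw [hcfix]

private lemma glue_step (σ τ πτ π' : Perm α) (lτ l' : List (Perm α))
    (hdisj : Perm.Disjoint (σ * τ⁻¹) τ)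
    (hπτs : πτ.support = τ.support)
    (hπ's : π'.support = (σ * τ⁻¹).support)
    (hpτ : lτ.prod = πτ * τ⁻¹) (hp' : l'.prod = π' * (σ * τ⁻¹)⁻¹) :
    (lτ ++ l').prod = (πτ * π') * σ⁻¹ ∧ (πτ * π').support = σ.support ∧
      (πτ * π').cycleType = πτ.cycleType + π'.cycleType ∧
      σ.support.card = (σ * τ⁻¹).support.card + τ.support.card := by
  have hστ : (σ * τ⁻¹) * τ = σ := by
    rw [mul_assoc, inv_mul_cancel, mul_one]
  have hsuppσ : σ.support = (σ * τ⁻¹).support ∪ τ.support := by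
    rw [← hdisj.support_mul, hστ]
  have hdsupp : _root_.Disjoint (σ * τ⁻¹).support τ.support := hdisj.disjoint_support
  have hπdisj : Perm.Disjoint πτ π' := by
    rw [Equiv.Perm.disjoint_iff_disjoint_support, hπτs, hπ's]
    exact hdsupp.symm
  have hτπ' : Perm.Disjoint τ π' := by
    rw [Equiv.Perm.disjoint_iff_disjoint_support, hπ's]
    exact hdsupp.symm
  have hcomm : π' * τ⁻¹ = τ⁻¹ * π' := ((hτπ'.commute).inv_left.eq).symm
  refine ⟨?_, ?_, hπdisj.cycleType_mul, ?_⟩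
  · rw [List.prod_append, hpτ, hp']
    have hσinv : σ⁻¹ = τ⁻¹ * (σ * τ⁻¹)⁻¹ := by
      rw [← mul_inv_rev, hστ]
    rw [hσinv]
    calc πτ * τ⁻¹ * (π' * (σ * τ⁻¹)⁻¹)
        = πτ * (τ⁻¹ * π') * (σ * τ⁻¹)⁻¹ := by group
      _ = πτ * (π' * τ⁻¹) * (σ * τ⁻¹)⁻¹ := by rw [hcomm]
      _ = πτ * π' * (τ⁻¹ * (σ * τ⁻¹)⁻¹) := by group
  · rw [hπdisj.support_mul, hπτs, hπ's, hsuppσ, Finset.union_comm]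
  · rw [hsuppσ, Finset.card_union_of_disjoint hdsupp]

private lemma factor_facts {σ c : Perm α} (hc : c ∈ σ.cycleFactorsFinset) :
    c.IsCycle ∧ Perm.Disjoint (σ * c⁻¹) c ∧
      σ.support.card = (σ * c⁻¹).support.card + c.support.card := by
  have h1 := (Equiv.Perm.mem_cycleFactorsFinset_iff.mp hc).1
  have h2 := Equiv.Perm.disjoint_mul_inv_of_mem_cycleFactorsFinset hc
  refine ⟨h1, h2, ?_⟩
  have h3 : (σ * c⁻¹) * c = σ := by rw [mul_assoc, inv_mul_cancel, mul_one]
  conv_lhs => rw [← h3]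
  rw [h2.support_mul, Finset.card_union_of_disjoint h2.disjoint_support]

private lemma exists_odd_cycle (σ : Perm α) (h : Odd σ.support.card) :
    ∃ c ∈ σ.cycleFactorsFinset, Odd c.support.card := by
  obtain ⟨k, hk_mem, hk_odd⟩ :=
    exists_odd_of_odd_sum (s := σ.cycleType) (by rw [Equiv.Perm.sum_cycleType]; exact h)
  rw [Equiv.Perm.cycleType_def, Multiset.mem_map] at hk_mem
  obtain ⟨c, hc, hck⟩ := hk_mem
  refine ⟨c, hc, ?_⟩
  simp only [Function.comp_apply] at hck
  rw [hck]
  exact hk_odd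

private lemma main_lemma : ∀ (N : ℕ) (σ : Perm α), σ.support.card ≤ N →
    ∃ (π : Perm α) (l : List (Perm α)), (∀ τ ∈ l, τ.IsSwap) ∧ l.prod = π * σ⁻¹ ∧
      2 * l.length ≤ σ.support.card ∧ π.support = σ.support ∧
      (if Even σ.support.card then π.cycleType = Multiset.replicate (σ.support.card / 2) 2
       else π.cycleType = Multiset.replicate ((σ.support.card - 3) / 2) 2 + {3}) := by
  intro N
  induction N with
  | zero =>
    intro σ h
    have hσ : σ = 1 := by
      rw [← Equiv.Perm.support_eq_empty_iff]
      exact Finset.card_eq_zero.mp (Nat.le_antisymm h (Nat.zero_le _))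
    subst hσ
    refine ⟨1, [], by simp, by simp, by simp, rfl, ?_⟩
    rw [if_pos (by simp)]
    simp
  | succ N ih =>
    intro σ hσN
    by_cases h1 : σ = 1
    · subst h1
      refine ⟨1, [], by simp, by simp, by simp, rfl, ?_⟩
      rw [if_pos (by simp)]
      simp
    rcases Nat.even_or_odd σ.support.card with hpar | hpar
    · -- σ has even support
      obtain ⟨x, hx⟩ : ∃ x, σ x ≠ x := by
        by_contra hcon
        push_neg at hcon
        exact h1 (Equiv.ext hcon)
      have hcmem : σ.cycleOf x ∈ σ.cycleFactorsFinset :=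
        Equiv.Perm.cycleOf_mem_cycleFactorsFinset_iff.mpr (Equiv.Perm.mem_support.mpr hx)
      set c := σ.cycleOf x with hcdef
      obtain ⟨hccyc, hcdisj, hccard⟩ := factor_facts hcmem
      have hk2 : 2 ≤ c.support.card := hccyc.two_le_card_support
      rcases Nat.even_or_odd c.support.card with hck | hck
      · -- even cycle
        obtain ⟨r, hr⟩ : ∃ r, c.support.card = 2 * r := by
          obtain ⟨u, hu⟩ := hck
          exact ⟨u, by omega⟩
        obtain ⟨π', l', hl's, hl'p, hl'len, hπ's, hπ't⟩ := ih (σ * c⁻¹) (by omega)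
        obtain ⟨πc, hπcs, hπct, hπcb⟩ := block_even c hccyc r hr
        obtain ⟨lc, hlcs, hlcp, hlclen⟩ := swap_factors _ (πc * c⁻¹) le_rfl
        obtain ⟨hgp, hgs, hgt, hgc⟩ := glue_step σ c πc π' lc l' hcdisj hπcs hπ's hlcp hl'p
        have hparσ' : Even (σ * c⁻¹).support.card := by
          obtain ⟨u, hu⟩ := hpar
          exact ⟨u - r, by omega⟩
        rw [if_pos hparσ'] at hπ't
        refine ⟨πc * π', lc ++ l', ?_, hgp, ?_, hgs, ?_⟩
        · intro τ hτ
          rcases List.mem_append.mp hτ with h | h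
          · exact hlcs τ h
          · exact hl's τ h
        · rw [List.length_append]
          omega
        · rw [if_pos hpar, hgt, hπct, hπ't, ← Multiset.replicate_add]
          congr 1
          omega
      · -- odd cycle inside even support: find a second odd cycle
        obtain ⟨s, hs⟩ : ∃ s, c.support.card = 2 * s + 3 := by
          obtain ⟨u, hu⟩ := hck
          exact ⟨u - 1, by omega⟩
        have hparσ' : Odd (σ * c⁻¹).support.card := by
          obtain ⟨u, hu⟩ := hpar
          exact ⟨u - s - 2, by omega⟩
        obtain ⟨d, hdmem, hdodd⟩ := exists_odd_cycle _ hparσ'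
        obtain ⟨hdcyc, hddisj, hdcard⟩ := factor_facts hdmem
        have hd2 := hdcyc.two_le_card_support
        obtain ⟨t, ht⟩ : ∃ t, d.support.card = 2 * t + 3 := by
          obtain ⟨u, hu⟩ := hdodd
          exact ⟨u - 1, by omega⟩
        have hsubd : d.support ⊆ (σ * c⁻¹).support :=
          Equiv.Perm.mem_cycleFactorsFinset_support_le hdmem
        have hcd : Perm.Disjoint c d := by
          rw [Equiv.Perm.disjoint_iff_disjoint_support]
          exact hcdisj.disjoint_support.symm.mono_right hsubd
        obtain ⟨πcd, hπcds, hπcdt, hπcdb⟩ := block_pair c d hccyc hdcyc hcd s t hs ht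
        obtain ⟨lcd, hlcds, hlcdp, hlcdlen⟩ := swap_factors _ (πcd * (c*d)⁻¹) le_rfl
        have hinveq : σ * (c * d)⁻¹ = (σ * c⁻¹) * d⁻¹ := by
          rw [mul_inv_rev, ← mul_assoc]
          rw [mul_assoc σ, (hcd.commute.inv_inv).symm.eq, ← mul_assoc]
        obtain ⟨π'', l'', hl''s, hl''p, hl''len, hπ''s, hπ''t⟩ :=
          ih ((σ * c⁻¹) * d⁻¹) (by omega)
        have hsub'' : ((σ * c⁻¹) * d⁻¹).support ⊆ (σ * c⁻¹).support := by
          have h3 : ((σ * c⁻¹) * d⁻¹) * d = σ * c⁻¹ := by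
            rw [mul_assoc, inv_mul_cancel, mul_one]
          conv_rhs => rw [← h3, hddisj.support_mul]
          exact Finset.subset_union_left
        have hdisjc'' : Perm.Disjoint ((σ * c⁻¹) * d⁻¹) c :=
          Equiv.Perm.disjoint_iff_disjoint_support.mpr
            (hcdisj.disjoint_support.mono_left hsub'')
        have hdisjcd : Perm.Disjoint (σ * (c * d)⁻¹) (c * d) := by
          rw [hinveq]
          exact hdisjc''.mul_right hddisj
        have hcds : πcd.support = (c * d).support := by
          rw [hπcds, hcd.support_mul]
        have hcdcard : (c * d).support.card = 2*s + 2*t + 6 := by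
          rw [hcd.support_mul, Finset.card_union_of_disjoint hcd.disjoint_support, hs, ht]
          omega
        have hl''p' : l''.prod = π'' * (σ * (c * d)⁻¹)⁻¹ := by
          rw [hinveq]
          exact hl''p
        have hπ''s' : π''.support = (σ * (c * d)⁻¹).support := by
          rw [hinveq]
          exact hπ''s
        obtain ⟨hgp, hgs, hgt, hgc⟩ :=
          glue_step σ (c * d) πcd π'' lcd l'' hdisjcd hcds hπ''s' hlcdp hl''p'
        have hparσ'' : Even ((σ * c⁻¹) * d⁻¹).support.card := by
          obtain ⟨u, hu⟩ := hpar
          exact ⟨u - s - t - 3, by omega⟩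
        rw [if_pos hparσ''] at hπ''t
        have hcard'' : (σ * (c * d)⁻¹).support.card = ((σ * c⁻¹) * d⁻¹).support.card := by
          rw [hinveq]
        refine ⟨πcd * π'', lcd ++ l'', ?_, hgp, ?_, hgs, ?_⟩
        · intro τ hτ
          rcases List.mem_append.mp hτ with h | h
          · exact hlcds τ h
          · exact hl''s τ h
        · rw [List.length_append]
          omega
        · rw [if_pos hpar, hgt, hπcdt, hπ''t, ← Multiset.replicate_add]
          congr 1
          omega
    · -- σ has odd support
      obtain ⟨c, hcmem, hcodd⟩ := exists_odd_cycle σ hpar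
      obtain ⟨hccyc, hcdisj, hccard⟩ := factor_facts hcmem
      have hk2 : 2 ≤ c.support.card := hccyc.two_le_card_support
      obtain ⟨s, hs⟩ : ∃ s, c.support.card = 2 * s + 3 := by
        obtain ⟨u, hu⟩ := hcodd
        exact ⟨u - 1, by omega⟩
      obtain ⟨π', l', hl's, hl'p, hl'len, hπ's, hπ't⟩ := ih (σ * c⁻¹) (by omega)
      obtain ⟨πc, hπcs, hπct, hπcb⟩ := block_odd c hccyc s hs
      obtain ⟨lc, hlcs, hlcp, hlclen⟩ := swap_factors _ (πc * c⁻¹) le_rfl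
      obtain ⟨hgp, hgs, hgt, hgc⟩ := glue_step σ c πc π' lc l' hcdisj hπcs hπ's hlcp hl'p
      have hparσ' : Even (σ * c⁻¹).support.card := by
        obtain ⟨u, hu⟩ := hpar
        exact ⟨u - s - 1, by omega⟩
      rw [if_pos hparσ'] at hπ't
      refine ⟨πc * π', lc ++ l', ?_, hgp, ?_, hgs, ?_⟩
      · intro τ hτ
        rcases List.mem_append.mp hτ with h | h
        · exact hlcs τ h
        · exact hl's τ h
      · rw [List.length_append]
        omega
      · rw [if_neg (Nat.not_even_iff_odd.mpr hpar), hgt, hπct, hπ't, add_right_comm,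
          ← Multiset.replicate_add]
        have harith : s + (σ * c⁻¹).support.card / 2 = (σ.support.card - 3) / 2 := by
          obtain ⟨u, hu⟩ := hparσ'
          omega
        rw [harith]

theorem reach_good_permutation (n m : ℕ) (hm : 2 ≤ m) (hmn : m ≤ n)
    (σ : Equiv.Perm (Fin n))
    (hfix : (Finset.univ.filter fun i => σ i = i).card = n - m) :
    ∃ l : List (Equiv.Perm (Fin n)), (∀ τ ∈ l, τ.IsSwap) ∧ 2 * l.length ≤ m ∧
      ((Finset.univ.filter fun i => (l.prod * σ) i = i).card = n - m) ∧
      (if Even m then (l.prod * σ).cycleType = Multiset.replicate (m / 2) 2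
       else (l.prod * σ).cycleType = Multiset.replicate ((m - 3) / 2) 2 + {3}) := by
  have hsupp : σ.support.card = m := by
    have h1 : (Finset.univ.filter fun i => σ i = i) = σ.supportᶜ := by
      ext i; simp [Perm.mem_support]
    have h2 : σ.supportᶜ.card = n - σ.support.card := by
      rw [Finset.card_compl, Fintype.card_fin]
    rw [h1, h2] at hfix
    have := Finset.card_le_univ σ.support
    simp only [Fintype.card_fin] at this
    omega
  obtain ⟨π, l, hl, hprod, hlen, hsup, htype⟩ := main_lemma m σ hsupp.le
  have hπσ : l.prod * σ = π := by rw [hprod]; group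
  refine ⟨l, hl, by omega, ?_, ?_⟩
  · rw [hπσ]
    have h1 : (Finset.univ.filter fun i => π i = i) = π.supportᶜ := by
      ext i; simp [Perm.mem_support]
    rw [h1, Finset.card_compl, Fintype.card_fin, hsup, hsupp]
  · rw [hsupp] at htype
    rwa [hπσ]
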